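/- Let p be a nonzero homogeneous polynomial of degree n in m variables with nonnegative real coefficients. Then p is H-stable if and only if for all real numbers x_1,...,x_m ≥ 0 and all real numbers y_1,...,y_m, one has |p(x_1 + i·y_1, ..., x_m + i·y_m)| ≥ p(x_1,...,x_m). -/

import Mathlib

open Polynomial Complex


/-- A multivariate real polynomial is H-stable if it does not vanish at any point
all of whose coordinates have positive real part. -/
def Hstable {σ : Type*} (p : MvPolynomial σ ℝ) : Prop :=
  ∀ z : σ → ℂ, (∀ i, 0 < (z i).re) → MvPolynomial.aeval z p ≠ 0

lemma coeff_prod_deg {ι : Type*} (s : Finset ι) (f : ι → Polynomial ℂ) (d : ι → ℕ)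
    (h : ∀ i ∈ s, (f i).natDegree ≤ d i) :
    (∏ i ∈ s, f i).coeff (∑ i ∈ s, d i) = ∏ i ∈ s, (f i).coeff (d i) := by
  classical
  induction s using Finset.induction_on with
  | empty => simp
  | @insert a s ha ih =>
    rw [Finset.prod_insert ha, Finset.sum_insert ha,
      Polynomial.coeff_mul_add_eq_of_natDegree_le (h a (Finset.mem_insert_self a s))
        ((Polynomial.natDegree_prod_le s f).trans
          (Finset.sum_le_sum fun i hi => h i (Finset.mem_insert_of_mem hi))),
      ih fun i hi => h i (Finset.mem_insert_of_mem hi), Finset.prod_insert ha]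

lemma eval_pos' {m : ℕ} (p : MvPolynomial (Fin m) ℝ) (hp : p ≠ 0) (hcoeff : ∀ c, 0 ≤ p.coeff c)
    (x : Fin m → ℝ) (hx : ∀ i, 0 < x i) : 0 < MvPolynomial.eval x p := by
  rw [MvPolynomial.eval_eq]
  obtain ⟨d, hd⟩ := MvPolynomial.support_nonempty.2 hp
  refine Finset.sum_pos' (fun d _ => mul_nonneg (hcoeff d)
    (Finset.prod_nonneg fun i _ => pow_nonneg (hx i).le _)) ⟨d, hd, ?_⟩
  exact mul_pos (lt_of_le_of_ne (hcoeff d) (Ne.symm (MvPolynomial.mem_support_iff.1 hd)))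
    (Finset.prod_pos fun i _ => pow_pos (hx i) _)

lemma one_le_multiset_prod (t : Multiset ℝ) (h : ∀ a ∈ t, 1 ≤ a) : 1 ≤ t.prod := by
  induction t using Multiset.induction_on with
  | empty => simp
  | cons a s ih =>
    rw [Multiset.prod_cons]
    have ha := h a (Multiset.mem_cons_self a s)
    have hs := ih fun b hb => h b (Multiset.mem_cons_of_mem hb)
    nlinarith

lemma key {m n : ℕ} (p : MvPolynomial (Fin m) ℝ) (hp : p ≠ 0)
    (hhom : p.IsHomogeneous n) (hcoeff : ∀ c, 0 ≤ p.coeff c) (hs : Hstable p)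
    (x y : Fin m → ℝ) (hx : ∀ i, 0 < x i) :
    MvPolynomial.eval x p ≤
      ‖MvPolynomial.aeval (fun i => (x i : ℂ) + (y i : ℂ) * Complex.I) p‖ := by
  classical
  set Φ : Fin m → Polynomial ℂ :=
    fun i => Polynomial.C (x i : ℂ) * Polynomial.X + Polynomial.C ((y i : ℂ) * Complex.I) with hΦ
  set q : Polynomial ℂ := MvPolynomial.aeval Φ p with hqdef
  have hΦdeg : ∀ i, (Φ i).natDegree ≤ 1 := by
    intro i
    refine (Polynomial.natDegree_add_le _ _).trans (max_le ?_ ?_)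
    · exact (Polynomial.natDegree_C_mul_le _ _).trans Polynomial.natDegree_X_le
    · exact le_trans (le_of_eq (Polynomial.natDegree_C _)) (by norm_num)
  have hΦc1 : ∀ i, (Φ i).coeff 1 = (x i : ℂ) := by
    intro i; simp [hΦ, Polynomial.coeff_C]
  have hdegsup : ∀ d ∈ p.support, ∑ i ∈ d.support, d i = n := by
    intro d hd
    by_contra hne
    exact MvPolynomial.mem_support_iff.1 hd (hhom.coeff_eq_zero hne)
  -- q as a sum
  have hqsum : q = ∑ d ∈ p.support,
      Polynomial.C ((MvPolynomial.coeff d p : ℝ) : ℂ) * ∏ i ∈ d.support, Φ i ^ d i := by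
    rw [hqdef, MvPolynomial.aeval_def, MvPolynomial.eval₂_eq]
    refine Finset.sum_congr rfl fun d _ => ?_
    rw [Polynomial.algebraMap_apply]
    norm_num
  -- coefficient n of q
  have hcoeffn : q.coeff n = ((MvPolynomial.eval x p : ℝ) : ℂ) := by
    rw [hqsum, Polynomial.finset_sum_coeff, MvPolynomial.eval_eq]
    push_cast
    refine Finset.sum_congr rfl fun d hd => ?_
    rw [Polynomial.coeff_C_mul, ← hdegsup d hd,
      coeff_prod_deg d.support (fun i => Φ i ^ d i) d
        (fun i _ => (Polynomial.natDegree_pow_le_of_le (d i) (hΦdeg i)).trans (by omega))]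
    congr 1
    refine Finset.prod_congr rfl fun i _ => ?_
    have := Polynomial.coeff_pow_of_natDegree_le (n := 1) (m := d i) (p := Φ i) (hΦdeg i)
    rw [mul_one] at this
    rw [this, hΦc1]
  -- degree bound
  have hdegq : q.natDegree ≤ n := by
    rw [hqsum]
    refine Polynomial.natDegree_sum_le_of_forall_le _ _ fun d hd => ?_
    refine (Polynomial.natDegree_C_mul_le _ _).trans ?_
    refine (Polynomial.natDegree_prod_le _ _).trans ?_
    rw [← hdegsup d hd]
    exact Finset.sum_le_sum fun i _ => (Polynomial.natDegree_pow_le_of_le (d i) (hΦdeg i)).trans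
      (by omega)
  have hpx : 0 < MvPolynomial.eval x p := eval_pos' p hp hcoeff x hx
  have hcne : q.coeff n ≠ 0 := by
    rw [hcoeffn]; exact_mod_cast hpx.ne'
  have hqne : q ≠ 0 := fun h => hcne (by simp [h])
  have hnd : q.natDegree = n :=
    le_antisymm hdegq (Polynomial.le_natDegree_of_ne_zero hcne)
  have hlc : q.leadingCoeff = ((MvPolynomial.eval x p : ℝ) : ℂ) := by
    rw [Polynomial.leadingCoeff, hnd, hcoeffn]
  -- evaluation of q
  have hqeval : ∀ t : ℂ, q.eval t =
      MvPolynomial.aeval (fun i => (x i : ℂ) * t + (y i : ℂ) * Complex.I) p := by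
    intro t
    have h := MvPolynomial.comp_aeval_apply
      ((Polynomial.aeval t).restrictScalars ℝ) (f := Φ) p
    simp only [AlgHom.coe_restrictScalars'] at h
    have hfun : (fun i => (Polynomial.aeval t) (Φ i)) =
        fun i => (x i : ℂ) * t + (y i : ℂ) * Complex.I := by
      funext i; simp [hΦ]
    rw [hfun] at h
    rw [hqdef, ← Polynomial.coe_aeval_eq_eval, h]
  -- roots have nonpositive real part
  have hroots : ∀ r ∈ q.roots, r.re ≤ 0 := by
    intro r hr
    by_contra hrre
    push_neg at hrre
    have hz : (∀ i, 0 < (((x i : ℂ) * r + (y i : ℂ) * Complex.I) : ℂ).re) := by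
      intro i
      simp only [Complex.add_re, Complex.mul_re, Complex.ofReal_re, Complex.ofReal_im,
        Complex.I_re, Complex.I_im]
      ring_nf
      nlinarith [hx i, hrre]
    have := hs _ hz
    rw [← hqeval r] at this
    exact this ((Polynomial.mem_roots hqne).1 hr)
  -- factorization
  have hfac := Polynomial.Splits.eq_prod_roots (IsAlgClosed.splits q)
  have heval1 : q.eval 1 = MvPolynomial.aeval (fun i => (x i : ℂ) + (y i : ℂ) * Complex.I) p := by
    rw [hqeval 1]; simp
  rw [← heval1]
  have habs : ‖q.eval 1‖ =
      (MvPolynomial.eval x p) * ((q.roots.map fun r => ‖1 - r‖).prod) := by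
    conv_lhs => rw [hfac]
    simp only [Polynomial.eval_mul, Polynomial.eval_C, Polynomial.eval_multiset_prod,
      Multiset.map_map, Function.comp, Polynomial.eval_sub, Polynomial.eval_X,
      Polynomial.eval_C, norm_mul, hlc]
    rw [Complex.norm_real, Real.norm_eq_abs, abs_of_pos hpx]
    congr 1
    rw [show ‖(Multiset.map (fun x => 1 - x) q.roots).prod‖ =
      (normHom : ℂ →*₀ ℝ) (Multiset.map (fun x => 1 - x) q.roots).prod from rfl,
      ← Multiset.prod_hom _ (normHom : ℂ →*₀ ℝ)]
    simp [Multiset.map_map, Function.comp, normHom]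
  rw [habs]
  nth_rewrite 1 [← mul_one (MvPolynomial.eval x p)]
  refine mul_le_mul_of_nonneg_left ?_ hpx.le
  refine one_le_multiset_prod _ ?_
  intro a ha
  simp only [Multiset.mem_map] at ha
  obtain ⟨r, hr, rfl⟩ := ha
  calc (1:ℝ) ≤ (1 - r).re := by simp [Complex.sub_re]; linarith [hroots r hr]
  _ ≤ ‖1 - r‖ := Complex.re_le_norm _

theorem stmt5 {m n : ℕ} (p : MvPolynomial (Fin m) ℝ) (hp : p ≠ 0)
    (hhom : p.IsHomogeneous n) (hcoeff : ∀ c, 0 ≤ p.coeff c) :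
    Hstable p ↔
      ∀ x y : Fin m → ℝ, (∀ i, 0 ≤ x i) →
        MvPolynomial.eval x p ≤
          ‖(MvPolynomial.aeval
            (fun i => (x i : ℂ) + (y i : ℂ) * Complex.I) p)‖ := by
  constructor
  · intro hs x y hx
    set F : ℝ → ℝ := fun ε => MvPolynomial.eval (fun i => x i + ε) p with hF
    set G : ℝ → ℝ := fun ε => ‖MvPolynomial.aeval
      (fun i => ((x i + ε : ℝ) : ℂ) + (y i : ℂ) * Complex.I) p‖ with hG
    have hFc : Continuous F := by
      exact (MvPolynomial.continuous_eval p).comp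
        (continuous_pi fun i => continuous_const.add continuous_id)
    have hGc : Continuous G := by
      have : G = fun ε => ‖MvPolynomial.eval
          (fun i => ((x i + ε : ℝ) : ℂ) + (y i : ℂ) * Complex.I)
          (MvPolynomial.map (algebraMap ℝ ℂ) p)‖ := by
        funext ε
        rw [hG]
        simp only [MvPolynomial.aeval_def, MvPolynomial.eval₂_eq_eval_map]
      rw [this]
      exact continuous_norm.comp
        ((MvPolynomial.continuous_eval _).comp (continuous_pi fun i =>
          ((Complex.continuous_ofReal.comp
            (continuous_const.add continuous_id)).add continuous_const)))
    have hFG : ∀ᶠ ε in nhdsWithin (0:ℝ) (Set.Ioi 0), F ε ≤ G ε := by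
      refine Filter.eventually_of_mem self_mem_nhdsWithin fun ε hε => ?_
      have hxe : ∀ i, 0 < x i + ε := fun i => by
        have : (0:ℝ) < ε := hε
        have := hx i; linarith
      have := key p hp hhom hcoeff hs (fun i => x i + ε) y hxe
      simpa [hF, hG] using this
    have h0 : MvPolynomial.eval x p = F 0 := by
      simp [hF]
    have h0' : ‖MvPolynomial.aeval
        (fun i => (x i : ℂ) + (y i : ℂ) * Complex.I) p‖ = G 0 := by
      rw [hG]; norm_num
    rw [h0, h0']
    exact le_of_tendsto_of_tendsto
      ((hFc.tendsto 0).mono_left nhdsWithin_le_nhds)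
      ((hGc.tendsto 0).mono_left nhdsWithin_le_nhds) hFG
  · intro h z hz
    have hx : ∀ i, (0:ℝ) ≤ (z i).re := fun i => (hz i).le
    have hkey := h (fun i => (z i).re) (fun i => (z i).im) hx
    have hzz : (fun i => (((z i).re : ℝ) : ℂ) + (((z i).im : ℝ) : ℂ) * Complex.I) = z := by
      funext i; exact Complex.re_add_im _
    rw [hzz] at hkey
    have hpos : 0 < MvPolynomial.eval (fun i => (z i).re) p :=
      eval_pos' p hp hcoeff _ hz
    intro hzero
    rw [hzero] at hkey
    simp at hkey
    linarith
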